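/- arXiv:2407.10150 — 3 statements merged into one kernel-verified Lean document; each statement's English description precedes it below -/
import Mathlib

section
/- Let n ≥ 1 and let φ : M_n(ℂ) → M_n(ℂ) be a (not necessarily linear, additive or continuous) map such that for any a, b ∈ M_n(ℂ) there is an algebra automorphism θ_{a,b} of M_n(ℂ) with φ(a)φ(b) = θ_{a,b}(ab). Then either φ or −φ is an algebra automorphism of M_n(ℂ). -/
/-- An algebra automorphism of a complex algebra: a bijective complex-linear map
which is multiplicative. -/
def IsAlgAutomorphism {A : Type*} [Ring A] [Algebra ℂ A] (θ : A → A) : Prop :=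
  Function.Bijective θ ∧ IsLinearMap ℂ θ ∧ ∀ a b : A, θ (a * b) = θ a * θ b

open Matrix LinearMap

theorem trace_toLin' (n : ℕ) (p : Matrix (Fin n) (Fin n) ℂ) :
    LinearMap.trace ℂ (Fin n → ℂ) (Matrix.toLin' p) = p.trace := by
  rw [LinearMap.trace_eq_matrix_trace ℂ (Pi.basisFun ℂ (Fin n)),
    LinearMap.toMatrix_eq_toMatrix', LinearMap.toMatrix'_toLin']

theorem idem_trace_one (n : ℕ) (p : Matrix (Fin n) (Fin n) ℂ) (hp : p * p = p)
    (ht : p.trace = 1) :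
    ∃ v w : Fin n → ℂ, p = Matrix.vecMulVec v w ∧ v ⬝ᵥ w = 1 := by
  have hf : Matrix.toLin' p ∘ₗ Matrix.toLin' p = Matrix.toLin' p := by
    rw [← Matrix.toLin'_mul, hp]
  obtain ⟨q, hq⟩ := (LinearMap.isProj_iff_isIdempotentElem _).mpr hf
  have htr := hq.trace
  rw [trace_toLin', ht] at htr
  have hdim : Module.finrank ℂ q = 1 := by exact_mod_cast htr.symm
  have hrank : Module.rank ℂ q = 1 := by
    rw [← Module.finrank_eq_rank]
    exact_mod_cast hdim
  obtain ⟨v, hvq, hvne, hle⟩ := (rank_submodule_eq_one_iff q).mp hrank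
  -- columns of p are multiples of v
  have hcol : ∀ j, ∃ c : ℂ, (fun i => p i j) = c • v := by
    intro j
    have hmem : p.mulVec (Pi.single j 1) ∈ q := hq.map_mem _
    obtain ⟨c, hc⟩ := Submodule.mem_span_singleton.mp (hle hmem)
    refine ⟨c, ?_⟩
    rw [hc]
    funext i
    simp [Matrix.mulVec_single]
  choose w hw using hcol
  refine ⟨v, w, ?_, ?_⟩
  · ext i j
    have := congrFun (hw j) i
    simp only [Pi.smul_apply, smul_eq_mul] at this
    simp [Matrix.vecMulVec_apply, this, mul_comm]
  · have : p.trace = v ⬝ᵥ w := by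
      rw [Matrix.trace]
      simp only [Matrix.diag]
      rw [dotProduct]
      congr 1
      funext i
      have := congrFun (hw i) i
      simp only [Pi.smul_apply, smul_eq_mul] at this
      rw [this, mul_comm]
    rw [← this, ht]


theorem idem_trace_n (n : ℕ) (p : Matrix (Fin n) (Fin n) ℂ) (hp : p * p = p)
    (ht : p.trace = (n : ℂ)) : p = 1 := by
  have hf : Matrix.toLin' p ∘ₗ Matrix.toLin' p = Matrix.toLin' p := by
    rw [← Matrix.toLin'_mul, hp]
  obtain ⟨q, hq⟩ := (LinearMap.isProj_iff_isIdempotentElem _).mpr hf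
  have htr := hq.trace
  rw [trace_toLin', ht] at htr
  have hdim : Module.finrank ℂ q = n := by exact_mod_cast htr.symm
  have hq' : q = ⊤ := Submodule.eq_top_of_finrank_eq (by simp [hdim])
  subst hq'
  have h2 : Matrix.toLin' p = Matrix.toLin' (1 : Matrix (Fin n) (Fin n) ℂ) := by
    apply LinearMap.ext
    intro x
    rw [Matrix.toLin'_one]
    exact hq.map_id x Submodule.mem_top
  exact Matrix.toLin'.injective h2




theorem aut_one {A : Type*} [Ring A] [Algebra ℂ A] {θ : A → A}
    (h : IsAlgAutomorphism θ) : θ 1 = 1 := by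
  obtain ⟨hbij, hlin, hmul⟩ := h
  have h1 : ∀ y, θ 1 * y = y := by
    intro y
    obtain ⟨x, rfl⟩ := hbij.2 y
    rw [← hmul, one_mul]
  have := h1 1
  rwa [mul_one] at this

theorem one_eq_sum_E (n : ℕ) :
    (1 : Matrix (Fin n) (Fin n) ℂ) = ∑ i : Fin n, Matrix.single i i 1 := by
  ext i j
  rw [Matrix.sum_apply]
  rcases eq_or_ne i j with rfl | hij
  · simp [Matrix.single, Matrix.one_apply]
  · rw [Matrix.one_apply_ne hij]
    rw [Finset.sum_eq_zero]
    intro k _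
    simp [Matrix.single]
    rintro rfl rfl
    exact hij rfl

theorem aut_trace {n : ℕ} (hn : 1 ≤ n) {θ : Matrix (Fin n) (Fin n) ℂ → Matrix (Fin n) (Fin n) ℂ}
    (h : IsAlgAutomorphism θ) (x : Matrix (Fin n) (Fin n) ℂ) : (θ x).trace = x.trace := by
  have h1 := aut_one h
  obtain ⟨hbij, hlin, hmul⟩ := h
  set θL : Matrix (Fin n) (Fin n) ℂ →ₗ[ℂ] Matrix (Fin n) (Fin n) ℂ := IsLinearMap.mk' θ hlin
    with hθL
  have hθLa : ∀ y, θL y = θ y := fun y => rfl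
  set E : Fin n → Fin n → Matrix (Fin n) (Fin n) ℂ := fun i j => Matrix.single i j 1 with hE
  have hoff : ∀ i j : Fin n, i ≠ j → (θ (E i j)).trace = 0 := by
    intro i j hij
    have key : E i j = E i i * E i j - E i j * E i i := by
      rw [hE]
      simp only
      rw [Matrix.single_mul_single_same, Matrix.single_mul_single_of_ne (h := Ne.symm hij), one_mul, sub_zero]
    rw [key, hlin.map_sub, hmul, hmul, Matrix.trace_sub, Matrix.trace_mul_comm, sub_self]
  have hdiageq : ∀ i j : Fin n, (θ (E i i)).trace = (θ (E j j)).trace := by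
    intro i j
    rcases eq_or_ne i j with rfl | hij
    · rfl
    · have key : E i i - E j j = E i j * E j i - E j i * E i j := by
        rw [hE]; simp only
        rw [Matrix.single_mul_single_same, Matrix.single_mul_single_same, one_mul]
      have h2 := congrArg (fun m => (θ m).trace) key
      simp only [hlin.map_sub, Matrix.trace_sub, hmul, Matrix.trace_mul_comm (θ (E i j))] at h2
      rw [sub_self] at h2
      exact sub_eq_zero.mp h2
  obtain ⟨i0⟩ : Nonempty (Fin n) := ⟨⟨0, hn⟩⟩
  have hdiag : ∀ i : Fin n, (θ (E i i)).trace = 1 := by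
    have hsum : ∑ i : Fin n, (θ (E i i)).trace = (n : ℂ) := by
      have h3 : ∑ i : Fin n, θ (E i i) = θ 1 := by
        rw [one_eq_sum_E]
        simp only [← hθLa]
        exact (map_sum θL _ _).symm
      rw [← Matrix.trace_sum, h3, h1, Matrix.trace_one]
      simp
    have hconst : ∀ i : Fin n, (θ (E i i)).trace = (θ (E i0 i0)).trace := fun i => hdiageq i i0
    rw [Finset.sum_congr rfl (fun i _ => hconst i), Finset.sum_const, Finset.card_univ,
      Fintype.card_fin, nsmul_eq_mul] at hsum
    have hn0 : (n : ℂ) ≠ 0 := Nat.cast_ne_zero.mpr (by omega)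
    intro i
    rw [hconst i]
    exact mul_left_cancel₀ hn0 (by rw [hsum, mul_one])
  -- general x
  have hdecomp : x = ∑ i : Fin n, ∑ j : Fin n, (x i j) • E i j := by
    conv_lhs => rw [Matrix.matrix_eq_sum_single x]
    apply Finset.sum_congr rfl; intro i _
    apply Finset.sum_congr rfl; intro j _
    rw [hE]; simp only
    rw [Matrix.smul_single, smul_eq_mul, mul_one]
  have hsplit : θ (∑ i : Fin n, ∑ j : Fin n, (x i j) • E i j)
      = ∑ i : Fin n, ∑ j : Fin n, (x i j) • θ (E i j) := by
    simp only [← hθLa, map_sum, _root_.map_smul]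
  calc (θ x).trace = ∑ i : Fin n, ∑ j : Fin n, (x i j) * (θ (E i j)).trace := by
        conv_lhs => rw [hdecomp]
        rw [hsplit, Matrix.trace_sum]
        apply Finset.sum_congr rfl; intro i _
        rw [Matrix.trace_sum]
        apply Finset.sum_congr rfl; intro j _
        rw [Matrix.trace_smul, smul_eq_mul]
    _ = ∑ i : Fin n, x i i := by
        apply Finset.sum_congr rfl
        intro i _
        rw [Finset.sum_eq_single i]
        · rw [hdiag i, mul_one]
        · intro j _ hj; rw [hoff i j (Ne.symm hj), mul_zero]
        · intro hi; exact absurd (Finset.mem_univ i) hi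
    _ = x.trace := rfl


variable {n : ℕ}

theorem vmv_mul_vmv (v w v' w' : Fin n → ℂ) :
    vecMulVec v w * vecMulVec v' w' = (w ⬝ᵥ v') • vecMulVec v w' := by
  ext i j
  simp only [Matrix.mul_apply, vecMulVec_apply, Matrix.smul_apply, smul_eq_mul, dotProduct]
  rw [Finset.sum_mul]
  apply Finset.sum_congr rfl
  intro k _
  ring

theorem trace_vmv (v w : Fin n → ℂ) : (vecMulVec v w).trace = v ⬝ᵥ w := by
  simp [Matrix.trace, Matrix.diag, vecMulVec_apply, dotProduct]

theorem vmv_mul (v w : Fin n → ℂ) (X : Matrix (Fin n) (Fin n) ℂ) :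
    vecMulVec v w * X = vecMulVec v (w ᵥ* X) := by
  ext i j
  simp only [Matrix.mul_apply, vecMulVec_apply, vecMul, dotProduct, Finset.mul_sum]
  apply Finset.sum_congr rfl
  intro k _
  ring

theorem mul_vmv (v w : Fin n → ℂ) (X : Matrix (Fin n) (Fin n) ℂ) :
    X * vecMulVec v w = vecMulVec (X *ᵥ v) w := by
  ext i j
  simp only [Matrix.mul_apply, vecMulVec_apply, mulVec, dotProduct, Finset.sum_mul]
  apply Finset.sum_congr rfl
  intro k _
  ring

theorem vmv_sandwich (v w v' w' : Fin n → ℂ) (X : Matrix (Fin n) (Fin n) ℂ) :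
    vecMulVec v w * X * vecMulVec v' w' = ((w ᵥ* X) ⬝ᵥ v') • vecMulVec v w' := by
  rw [vmv_mul, vmv_mul_vmv]

theorem vmv_ne_zero {v w : Fin n → ℂ} (hv : v ≠ 0) (hw : w ≠ 0) :
    vecMulVec v w ≠ 0 := by
  obtain ⟨i, hi⟩ := Function.ne_iff.mp hv
  obtain ⟨j, hj⟩ := Function.ne_iff.mp hw
  intro h
  have := congrFun (congrFun h i) j
  simp only [vecMulVec_apply, Matrix.zero_apply] at this
  rcases mul_eq_zero.mp this with h' | h'
  · exact hi h'
  · exact hj h'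

theorem trace_vmv_mul (v w : Fin n → ℂ) (X : Matrix (Fin n) (Fin n) ℂ) :
    (vecMulVec v w * X).trace = (w ᵥ* X) ⬝ᵥ v := by
  rw [vmv_mul, trace_vmv, dotProduct_comm]

theorem trace_E_mul (i j : Fin n) (a : Matrix (Fin n) (Fin n) ℂ) :
    (Matrix.single i j 1 * a).trace = a j i := by
  rw [Matrix.trace]
  rw [Finset.sum_eq_single i]
  · simp [Matrix.diag]
  · intro r _ hr
    simp only [Matrix.diag]
    rw [Matrix.single_mul_apply_of_ne (h := hr)]
  · intro h; exact absurd (Finset.mem_univ i) h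


theorem vecMul_vmv {n : ℕ} (u x y : Fin n → ℂ) :
    u ᵥ* Matrix.vecMulVec x y = (u ⬝ᵥ x) • y := by
  funext j
  simp only [Matrix.vecMul, dotProduct, Matrix.vecMulVec_apply, Pi.smul_apply,
    smul_eq_mul, Finset.sum_mul]
  apply Finset.sum_congr rfl
  intro k _
  ring

theorem extract_sum {n : ℕ} (u v' : Fin n → ℂ) (s : Finset (Fin n))
    (f : Fin n → Matrix (Fin n) (Fin n) ℂ) :
    u ᵥ* (∑ k ∈ s, f k) ⬝ᵥ v' = ∑ k ∈ s, u ᵥ* f k ⬝ᵥ v' := by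
  classical
  induction s using Finset.induction_on with
  | empty => simp
  | insert _ _ h ih =>
    rw [Finset.sum_insert h, Finset.sum_insert h, Matrix.vecMul_add, add_dotProduct, ih]

theorem stmt1 (n : ℕ) (hn : 1 ≤ n)
    (φ : Matrix (Fin n) (Fin n) ℂ → Matrix (Fin n) (Fin n) ℂ)
    (hφ : ∀ a b : Matrix (Fin n) (Fin n) ℂ,
      ∃ θ : Matrix (Fin n) (Fin n) ℂ → Matrix (Fin n) (Fin n) ℂ,
        IsAlgAutomorphism θ ∧ φ a * φ b = θ (a * b)) :
    IsAlgAutomorphism φ ∨ IsAlgAutomorphism (fun a => -φ a) := by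
  classical
  choose θf hθaut hθeq using hφ
  -- basic consequences
  have H0 : ∀ a b : Matrix (Fin n) (Fin n) ℂ, a * b = 0 → φ a * φ b = 0 := by
    intro a b h
    rw [hθeq a b, h, (hθaut a b).2.1.map_zero]
  have Htr : ∀ a b : Matrix (Fin n) (Fin n) ℂ, (φ a * φ b).trace = (a * b).trace := by
    intro a b
    rw [hθeq a b]
    exact aut_trace hn (hθaut a b) _
  set E : Fin n → Fin n → Matrix (Fin n) (Fin n) ℂ := fun i j => Matrix.single i j 1 with hE
  have hEmulsame : ∀ i j k : Fin n, E i j * E j k = E i k := by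
    intro i j k
    rw [hE]; simp only
    rw [Matrix.single_mul_single_same, one_mul]
  have hEmulne : ∀ (i j k l : Fin n), j ≠ k → E i j * E k l = 0 := by
    intro i j k l h
    rw [hE]; simp only
    rw [Matrix.single_mul_single_of_ne (h := h)]
  have hEtrace : ∀ i : Fin n, (E i i).trace = 1 := by
    intro i
    have : E i i = E i i * 1 := (mul_one _).symm
    rw [hE]; simp only
    rw [show Matrix.single i i (1:ℂ) = Matrix.single i i 1 * 1 from (mul_one _).symm,
      trace_E_mul]
    simp
  set q : Fin n → Matrix (Fin n) (Fin n) ℂ := fun i => φ (E i i) with hq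
  set p : Fin n → Matrix (Fin n) (Fin n) ℂ := fun i => q i * q i with hp
  have hp_eq_theta : ∀ i, p i = θf (E i i) (E i i) (E i i) := by
    intro i
    rw [hp]; simp only
    rw [hq]; simp only
    rw [hθeq, hEmulsame]
  have hp_idem : ∀ i, p i * p i = p i := by
    intro i
    rw [hp_eq_theta]
    rw [← (hθaut (E i i) (E i i)).2.2, hEmulsame]
  have hp_tr : ∀ i, (p i).trace = 1 := by
    intro i
    rw [hp]; simp only
    rw [Htr, hEmulsame, hEtrace]
  have hq_mul_zero : ∀ i j : Fin n, i ≠ j → q i * q j = 0 := by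
    intro i j hij
    exact H0 _ _ (hEmulne i i j j hij)
  have hpp : ∀ i j : Fin n, i ≠ j → p i * p j = 0 := by
    intro i j hij
    rw [hp]; simp only
    calc q i * q i * (q j * q j) = q i * (q i * q j) * q j := by
          simp only [mul_assoc]
      _ = 0 := by rw [hq_mul_zero i j hij]; simp
  have hsum : ∑ i : Fin n, p i = 1 := by
    apply idem_trace_n n
    · rw [Finset.sum_mul_sum]
      apply Finset.sum_congr rfl
      intro i _
      rw [Finset.sum_eq_single i]
      · exact hp_idem i
      · intro j _ hj
        exact hpp i j (Ne.symm hj)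
      · intro h; exact absurd (Finset.mem_univ i) h
    · rw [Matrix.trace_sum]
      simp [hp_tr]
  -- rank one decomposition of the p i
  choose v w hP hdot using fun i => idem_trace_one n (p i) (hp_idem i) (hp_tr i)
  have hv_ne : ∀ i, v i ≠ 0 := by
    intro i h
    have := hdot i
    rw [h, zero_dotProduct] at this
    exact zero_ne_one this
  have hw_ne : ∀ i, w i ≠ 0 := by
    intro i h
    have := hdot i
    rw [h, dotProduct_zero] at this
    exact zero_ne_one this
  have hwv : ∀ i j : Fin n, i ≠ j → w i ⬝ᵥ v j = 0 := by
    intro i j hij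
    have h1 := hpp i j hij
    rw [hP i, hP j, vmv_mul_vmv] at h1
    rcases smul_eq_zero.mp h1 with h | h
    · exact h
    · exact absurd h (vmv_ne_zero (hv_ne i) (hw_ne j))
  have hwv_one : ∀ i : Fin n, w i ⬝ᵥ v i = 1 := by
    intro i
    have h1 := hp_idem i
    rw [hP i, vmv_mul_vmv] at h1
    have h2 := congrArg Matrix.trace h1
    rw [Matrix.trace_smul, trace_vmv, hdot i, smul_eq_mul, mul_one] at h2
    exact h2
  -- sandwich lemma
  have hsand : ∀ (i j : Fin n) (X : Matrix (Fin n) (Fin n) ℂ),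
      (∀ k, k ≠ i → p k * X = 0) → (∀ k, k ≠ j → X * p k = 0) →
      X = p i * X * p j := by
    intro i j X h1 h2
    have e1 : X = X * p j := by
      conv_lhs => rw [← mul_one X, ← hsum]
      rw [Finset.mul_sum]
      rw [Finset.sum_eq_single j]
      · intro k _ hk; exact h2 k hk
      · intro h; exact absurd (Finset.mem_univ j) h
    have e2 : X * p j = p i * (X * p j) := by
      conv_lhs => rw [← one_mul (X * p j), ← hsum]
      rw [Finset.sum_mul]
      rw [Finset.sum_eq_single i]
      · intro k _ hk
        rw [← mul_assoc, h1 k hk, zero_mul]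
      · intro h; exact absurd (Finset.mem_univ i) h
    calc X = X * p j := e1
      _ = p i * (X * p j) := e2
      _ = p i * X * p j := (mul_assoc _ _ _).symm
  -- every φ (E i j) is a multiple of vecMulVec (v i) (w j)
  have hfA : ∀ i j : Fin n,
      φ (E i j) = ((w i ᵥ* φ (E i j)) ⬝ᵥ v j) • vecMulVec (v i) (w j) := by
    intro i j
    have h1 : ∀ k, k ≠ i → p k * φ (E i j) = 0 := by
      intro k hk
      have hz : φ (E k k) * φ (E i j) = 0 := H0 _ _ (hEmulne k k i j hk)
      rw [hp]; simp only
      rw [mul_assoc]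
      rw [hq]; simp only
      rw [hz, mul_zero]
    have h2 : ∀ k, k ≠ j → φ (E i j) * p k = 0 := by
      intro k hk
      have hz : φ (E i j) * φ (E k k) = 0 := H0 _ _ (hEmulne i j k k (Ne.symm hk))
      rw [hp]; simp only
      rw [← mul_assoc]
      rw [hq]; simp only
      rw [hz, zero_mul]
    have h3 := hsand i j _ h1 h2
    conv_lhs => rw [h3, hP i, hP j]
    rw [vmv_sandwich]
  set μ : Fin n → Fin n → ℂ := fun i j => (w i ᵥ* φ (E i j)) ⬝ᵥ v j with hμ
  have hB : ∀ i j : Fin n, μ i j * μ j i = 1 := by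
    intro i j
    have htr := Htr (E i j) (E j i)
    rw [hEmulsame, hEtrace] at htr
    rw [hfA i j, hfA j i, smul_mul_assoc, mul_smul_comm, vmv_mul_vmv, hwv_one j] at htr
    rw [one_smul, smul_smul, Matrix.trace_smul, trace_vmv, hdot i, smul_eq_mul, mul_one] at htr
    exact htr
  have hμ_ne : ∀ i j : Fin n, μ i j ≠ 0 := by
    intro i j
    exact left_ne_zero_of_mul_eq_one (hB i j)
  -- entries of φ a
  have hC : ∀ (a : Matrix (Fin n) (Fin n) ℂ) (i j : Fin n),
      (w i ᵥ* φ a) ⬝ᵥ v j = μ i j * a i j := by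
    intro a i j
    have htr := Htr (E j i) a
    rw [show (E j i * a).trace = a i j from trace_E_mul j i a] at htr
    rw [hfA j i, smul_mul_assoc, Matrix.trace_smul, trace_vmv_mul, smul_eq_mul] at htr
    calc (w i ᵥ* φ a) ⬝ᵥ v j = (μ i j * μ j i) * ((w i ᵥ* φ a) ⬝ᵥ v j) := by
          rw [hB i j, one_mul]
      _ = μ i j * (μ j i * ((w i ᵥ* φ a) ⬝ᵥ v j)) := by ring
      _ = μ i j * a i j := by rw [htr]
  -- reconstruction of φ a
  have hD : ∀ a : Matrix (Fin n) (Fin n) ℂ,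
      φ a = ∑ i : Fin n, ∑ j : Fin n, (μ i j * a i j) • vecMulVec (v i) (w j) := by
    intro a
    calc φ a = (∑ i : Fin n, p i) * φ a * (∑ j : Fin n, p j) := by
          rw [hsum, one_mul, mul_one]
      _ = ∑ i : Fin n, ∑ j : Fin n, p i * φ a * p j := by
          rw [Finset.sum_mul, Finset.sum_mul]
          apply Finset.sum_congr rfl
          intro i _
          rw [Finset.mul_sum]
      _ = ∑ i : Fin n, ∑ j : Fin n, (μ i j * a i j) • vecMulVec (v i) (w j) := by
          apply Finset.sum_congr rfl; intro i _
          apply Finset.sum_congr rfl; intro j _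
          rw [hP i, hP j, vmv_sandwich, hC a i j]
  -- key orthogonality relation for μ
  have hE2 : ∀ (i j : Fin n) (y z : Fin n → ℂ), y ⬝ᵥ z = 0 →
      ∑ k : Fin n, (μ i k * y k) * (μ k j * z k) = 0 := by
    intro i j y z hyz
    set a : Matrix (Fin n) (Fin n) ℂ := vecMulVec (Pi.single i 1) y with ha
    set b : Matrix (Fin n) (Fin n) ℂ := vecMulVec z (Pi.single j 1) with hb
    have hab : a * b = 0 := by
      rw [ha, hb, vmv_mul_vmv, hyz, zero_smul]
    have h0 := H0 _ _ hab
    have hsplit : φ a * φ b = ∑ k : Fin n, φ a * p k * φ b := by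
      conv_lhs => rw [show φ a * φ b = φ a * 1 * φ b by rw [mul_one], ← hsum]
      rw [Finset.mul_sum, Finset.sum_mul]
    have hext : ∀ k : Fin n,
        (w i ᵥ* (φ a * p k * φ b)) ⬝ᵥ v j = (μ i k * y k) * (μ k j * z k) := by
      intro k
      have e1 : φ a * p k * φ b = vecMulVec (φ a *ᵥ v k) (w k ᵥ* φ b) := by
        rw [hP k, mul_vmv, vmv_mul]
      rw [e1, vecMul_vmv, smul_dotProduct, smul_eq_mul]
      have e2 : w i ⬝ᵥ (φ a *ᵥ v k) = μ i k * y k := by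
        rw [dotProduct_mulVec, hC a i k, ha]
        rw [Matrix.vecMulVec_apply, Pi.single_eq_same, one_mul]
      have e3 : (w k ᵥ* φ b) ⬝ᵥ v j = μ k j * z k := by
        rw [hC b k j, hb]
        rw [Matrix.vecMulVec_apply, Pi.single_eq_same, mul_one]
      rw [e2, e3]
    have final : (w i ᵥ* (φ a * φ b)) ⬝ᵥ v j = ∑ k : Fin n, (μ i k * y k) * (μ k j * z k) := by
      rw [hsplit, extract_sum]
      exact Finset.sum_congr rfl fun k _ => hext k
    rw [h0] at final
    rw [← final]
    simp
  -- μ i k * μ k j is independent of k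
  have hconst : ∀ i j k l : Fin n, μ i k * μ k j = μ i l * μ l j := by
    intro i j k l
    rcases eq_or_ne k l with rfl | hkl
    · rfl
    set y : Fin n → ℂ := Pi.single k 1 + Pi.single l 1 with hy
    set z : Fin n → ℂ := Pi.single k 1 + Pi.single l (-1) with hz
    have hyz : y ⬝ᵥ z = 0 := by
      rw [hy, hz]
      simp [add_dotProduct, dotProduct_add, single_dotProduct,
        Pi.single_eq_of_ne hkl, Pi.single_eq_of_ne (Ne.symm hkl)]
    have hsum2 := hE2 i j y z hyz
    have hyk : y k = 1 := by rw [hy]; simp [Pi.single_eq_of_ne hkl]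
    have hyl : y l = 1 := by rw [hy]; simp [Pi.single_eq_of_ne (Ne.symm hkl)]
    have hzk : z k = 1 := by rw [hz]; simp [Pi.single_eq_of_ne hkl]
    have hzl : z l = -1 := by rw [hz]; simp [Pi.single_eq_of_ne (Ne.symm hkl)]
    have hval : ∑ r : Fin n, (μ i r * y r) * (μ r j * z r)
        = (μ i k * μ k j) - (μ i l * μ l j) := by
      rw [← Finset.sum_subset (Finset.subset_univ {k, l})]
      · rw [Finset.sum_pair hkl, hyk, hyl, hzk, hzl]
        ring
      · intro x _ hx
        simp only [Finset.mem_insert, Finset.mem_singleton] at hx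
        push_neg at hx
        have hy0 : y x = 0 := by
          rw [hy]; simp [Pi.single_eq_of_ne hx.1, Pi.single_eq_of_ne hx.2]
        rw [hy0]
        ring
    rw [hval] at hsum2
    exact sub_eq_zero.mp hsum2
  -- all diagonal μ's are equal
  have hsame : ∀ i j : Fin n, μ i i = μ j j := by
    intro i j
    rcases eq_or_ne i j with rfl | hij
    · rfl
    have h := hconst i j i j
    rw [mul_comm (μ i j) (μ j j)] at h
    exact mul_right_cancel₀ (hμ_ne i j) h
  set i0 : Fin n := ⟨0, hn⟩ with hi0
  set c : ℂ := μ i0 i0 with hc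
  have hc2 : c * c = 1 := hB i0 i0
  set d : Fin n → ℂ := fun k => μ i0 k with hd
  have hd_ne : ∀ k, d k ≠ 0 := fun k => hμ_ne i0 k
  have hμval : ∀ i j : Fin n, μ i j = c * d j * (d i)⁻¹ := by
    intro i j
    have h := hconst i0 j i j
    rw [hsame j i0] at h
    -- h : μ i0 i * μ i j = μ i0 j * μ i0 i0,  i.e.  d i * μ i j = d j * c
    have h2 : d i * μ i j = c * d j := by
      rw [hd, hc]; simp only
      rw [h]; ring
    field_simp [hd_ne i] at h2 ⊢
    linear_combination h2
  -- the conjugating matrices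
  set Mm : Matrix (Fin n) (Fin n) ℂ := Matrix.of (fun r i => (d i)⁻¹ * v i r) with hMm
  set Nm : Matrix (Fin n) (Fin n) ℂ := Matrix.of (fun j s => d j * w j s) with hNm
  have hNM : Nm * Mm = 1 := by
    ext j k
    rw [Matrix.mul_apply]
    have e : ∀ b, Nm j b * Mm b k = (d j * (d k)⁻¹) * (w j b * v k b) := by
      intro b
      rw [hNm, hMm]
      simp only [Matrix.of_apply]
      ring
    rw [Finset.sum_congr rfl fun b _ => e b, ← Finset.mul_sum]
    have : ∑ b : Fin n, w j b * v k b = w j ⬝ᵥ v k := rfl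
    rw [this]
    rcases eq_or_ne j k with rfl | hjk
    · rw [hwv_one j, Matrix.one_apply_eq, mul_one]
      field_simp [hd_ne j]
    · rw [hwv j k hjk, Matrix.one_apply_ne hjk, mul_zero]
  have hMN : Mm * Nm = 1 := mul_eq_one_comm.mp hNM
  -- φ is c • conjugation
  have hφMN : ∀ a : Matrix (Fin n) (Fin n) ℂ, φ a = c • (Mm * a * Nm) := by
    intro a
    rw [hD a]
    ext r s
    rw [Matrix.smul_apply, Matrix.mul_apply, Matrix.sum_apply]
    simp only [Matrix.sum_apply, Matrix.smul_apply, Matrix.vecMulVec_apply, smul_eq_mul]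
    rw [Finset.sum_comm]
    rw [Finset.mul_sum]
    apply Finset.sum_congr rfl
    intro j _
    rw [Matrix.mul_apply, Finset.sum_mul, Finset.mul_sum]
    apply Finset.sum_congr rfl
    intro i _
    rw [hμval i j, hMm, hNm]
    simp only [Matrix.of_apply]
    field_simp [hd_ne i]
  -- the conjugation map is an algebra automorphism
  have cancelN : ∀ x, Nm * (Mm * x * Nm) * Mm = x := by
    intro x
    calc Nm * (Mm * x * Nm) * Mm = (Nm * Mm) * x * (Nm * Mm) := by
          simp only [mul_assoc]
      _ = x := by rw [hNM, one_mul, mul_one]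
  have cancelM : ∀ x, Mm * (Nm * x * Mm) * Nm = x := by
    intro x
    calc Mm * (Nm * x * Mm) * Nm = (Mm * Nm) * x * (Mm * Nm) := by
          simp only [mul_assoc]
      _ = x := by rw [hMN, one_mul, mul_one]
  have hψ : IsAlgAutomorphism (fun a : Matrix (Fin n) (Fin n) ℂ => Mm * a * Nm) := by
    refine ⟨⟨?_, ?_⟩, ⟨?_, ?_⟩, ?_⟩
    · intro a b h
      simp only at h
      calc a = Nm * (Mm * a * Nm) * Mm := (cancelN a).symm
        _ = Nm * (Mm * b * Nm) * Mm := by rw [h]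
        _ = b := cancelN b
    · intro b
      exact ⟨Nm * b * Mm, cancelM b⟩
    · intro a b
      simp only [mul_add, add_mul]
    · intro c' a
      simp only [mul_smul_comm, smul_mul_assoc]
    · intro a b
      simp only
      calc Mm * (a * b) * Nm = Mm * a * ((Nm * Mm) * (b * Nm)) := by
            rw [hNM, one_mul]
            simp only [mul_assoc]
        _ = Mm * a * Nm * (Mm * b * Nm) := by simp only [mul_assoc]
  rcases mul_self_eq_one_iff.mp hc2 with hc1 | hc1
  · left
    have hfe : φ = fun a => Mm * a * Nm := by
      funext a
      rw [hφMN a, hc1, one_smul]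
    rw [hfe]
    exact hψ
  · right
    have hfe : (fun a => -φ a) = fun a => Mm * a * Nm := by
      funext a
      rw [hφMN a, hc1]
      simp
    rw [hfe]
    exact hψ
end

section
/- Let H be a complex Hilbert space and let φ : B(H) → B(H) be a (not necessarily linear, additive or continuous) map whose range contains all rank-one orthogonal projections on H. Suppose for any a, b ∈ B(H) there is a *-automorphism θ_{a,b} of B(H) with φ(a)*φ(b) = θ_{a,b}(a*b). Then φ(I) is a unitary operator on H and ‖φ(a)‖ = ‖a‖ for every a ∈ B(H). -/
set_option synthInstance.maxHeartbeats 1000000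
set_option maxHeartbeats 1000000

/-- A `*`-automorphism of a complex `*`-algebra: a bijective complex-linear multiplicative
map preserving the star operation. -/
def IsStarAutomorphism {A : Type*} [Ring A] [Algebra ℂ A] [Star A] (θ : A → A) : Prop :=
  Function.Bijective θ ∧ IsLinearMap ℂ θ ∧ (∀ a b : A, θ (a * b) = θ a * θ b) ∧
    ∀ a : A, θ (star a) = star (θ a)

theorem stmt14 {H : Type*} [NormedAddCommGroup H] [InnerProductSpace ℂ H]
    [CompleteSpace H]
    (φ : (H →L[ℂ] H) → (H →L[ℂ] H))
    -- the range of `φ` contains all rank-one orthogonal projections `y ↦ ⟨y, x⟩ x`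
    (hrange : ∀ x : H, ‖x‖ = 1 → ∃ a, φ a = (innerSL ℂ x).smulRight x)
    -- operational 2-local `*`-automorphism condition
    (hφ : ∀ a b : H →L[ℂ] H, ∃ θ : (H →L[ℂ] H) → (H →L[ℂ] H),
      IsStarAutomorphism θ ∧ star (φ a) * φ b = θ (star a * b)) :
    φ 1 ∈ unitary (H →L[ℂ] H) ∧ ∀ a : H →L[ℂ] H, ‖φ a‖ = ‖a‖ := by
    -- every star automorphism is isometric
  have key : ∀ θ : (H →L[ℂ] H) → (H →L[ℂ] H), IsStarAutomorphism θ →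
      ∀ x : H →L[ℂ] H, ‖θ x‖ = ‖x‖ := by
    rintro θ ⟨hbij, hlin, hmul, hstar⟩ x
    let ψ : (H →L[ℂ] H) →⋆ₙₐ[ℂ] (H →L[ℂ] H) :=
      { toFun := θ, map_smul' := hlin.map_smul, map_zero' := hlin.map_zero,
        map_add' := hlin.map_add, map_mul' := hmul, map_star' := hstar }
    exact NonUnitalStarAlgHom.norm_map ψ hbij.injective x
  have θone : ∀ θ : (H →L[ℂ] H) → (H →L[ℂ] H), IsStarAutomorphism θ → θ 1 = 1 := by
    rintro θ ⟨hbij, hlin, hmul, hstar⟩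
    obtain ⟨a, ha⟩ := hbij.surjective 1
    have h := hmul 1 a
    rw [one_mul, ha] at h
    rw [mul_one] at h
    exact h.symm
  -- θ injective + linear: θ x = 0 → x = 0
  have θzero : ∀ θ : (H →L[ℂ] H) → (H →L[ℂ] H), IsStarAutomorphism θ →
      ∀ x, θ x = 0 → x = 0 := by
    rintro θ ⟨hbij, hlin, hmul, hstar⟩ x hx
    apply hbij.injective
    rw [hx, hlin.map_zero]
  -- norm preservation
  have hnorm : ∀ a : H →L[ℂ] H, ‖φ a‖ = ‖a‖ := by
    intro a
    obtain ⟨θ, hθ, heq⟩ := hφ a a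
    have h1 : ‖star (φ a) * φ a‖ = ‖star a * a‖ := by rw [heq, key θ hθ]
    rw [CStarRing.norm_star_mul_self, CStarRing.norm_star_mul_self] at h1
    exact (mul_self_inj_of_nonneg (norm_nonneg _) (norm_nonneg _)).mp h1
  set u := φ 1 with hu
  obtain ⟨θ₀, hθ₀, heq₀⟩ := hφ 1 1
  have hu1 : star u * u = 1 := by rw [heq₀, star_one, one_mul, θone θ₀ hθ₀]
  -- u is isometric on vectors
  have hiso : ∀ y : H, ‖u y‖ = ‖y‖ := by
    intro y
    have h : (star u * u) y = y := by rw [hu1]; rfl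
    have h2 : inner ℂ (u y) (u y) = (inner ℂ y y : ℂ) := by
      calc inner ℂ (u y) (u y) = inner ℂ ((ContinuousLinearMap.adjoint u) (u y)) y :=
            (ContinuousLinearMap.adjoint_inner_left u y (u y)).symm
        _ = (inner ℂ y y : ℂ) := by
            rw [← ContinuousLinearMap.star_eq_adjoint]
            exact congrArg (fun v => (inner ℂ v y : ℂ)) h
    rw [inner_self_eq_norm_sq_to_K, inner_self_eq_norm_sq_to_K] at h2
    have h3 : ‖u y‖ ^ 2 = ‖y‖ ^ 2 := by exact_mod_cast h2
    exact (sq_eq_sq₀ (norm_nonneg _) (norm_nonneg _)).mp h3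
  -- the range of u
  set K : Submodule ℂ H := LinearMap.range (u : H →ₗ[ℂ] H) with hK
  have hKclosed : IsClosed (K : Set H) := by
    have : Isometry u := AddMonoidHomClass.isometry_of_norm u hiso
    have hr : (K : Set H) = Set.range u := by
      ext z; simp [hK, LinearMap.mem_range, Set.mem_range]
    rw [hr]
    exact this.isClosedEmbedding.isClosed_range
  haveI : CompleteSpace K := hKclosed.completeSpace_coe
  have hKorth : Kᗮ = ⊥ := by
    by_contra hne
    obtain ⟨x, hxK, hx0⟩ := Submodule.exists_mem_ne_zero_of_ne_bot hne
    set x' : H := ‖x‖⁻¹ • x with hx'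
    have hx'1 : ‖x'‖ = 1 := by
      rw [hx', norm_smul, norm_inv, norm_norm, inv_mul_cancel₀ (norm_ne_zero_iff.mpr hx0)]
    have hx'K : x' ∈ Kᗮ := Submodule.smul_mem _ _ hxK
    obtain ⟨a, ha⟩ := hrange x' hx'1
    obtain ⟨θ, hθ, heq⟩ := hφ 1 a
    rw [star_one, one_mul, ha] at heq
    -- star u * p = 0
    have hadj : (ContinuousLinearMap.adjoint u) x' = 0 := by
      rw [← inner_self_eq_zero (𝕜 := ℂ)]
      rw [ContinuousLinearMap.adjoint_inner_left]
      exact (Submodule.mem_orthogonal' _ _).mp hx'K _ (LinearMap.mem_range_self (u : H →ₗ[ℂ] H) _)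
    have hzero : star u * ((innerSL ℂ x').smulRight x') = 0 := by
      ext y
      simp only [ContinuousLinearMap.mul_apply, ContinuousLinearMap.smulRight_apply,
        ContinuousLinearMap.zero_apply, ContinuousLinearMap.star_eq_adjoint, map_smul, hadj,
        smul_zero]
    rw [hzero] at heq
    have ha0 : a = 0 := θzero θ hθ a heq.symm
    rw [ha0] at ha
    obtain ⟨θ', hθ', heq'⟩ := hφ 0 0
    rw [ha, star_zero, zero_mul] at heq'
    have hlin' := hθ'.2.1
    rw [hlin'.map_zero] at heq'
    -- so p* p = 0 hence p = 0
    have hp0 : (innerSL ℂ x').smulRight x' = 0 := by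
      have h : ‖((innerSL ℂ x').smulRight x' : H →L[ℂ] H)‖ *
          ‖((innerSL ℂ x').smulRight x' : H →L[ℂ] H)‖ = 0 := by
        rw [← CStarRing.norm_star_mul_self, heq', norm_zero]
      exact norm_eq_zero.mp (mul_self_eq_zero.mp h)
    have := congrArg (fun f : H →L[ℂ] H => f x') hp0
    simp only [ContinuousLinearMap.smulRight_apply, ContinuousLinearMap.zero_apply,
      innerSL_apply_apply] at this
    rw [inner_self_eq_norm_sq_to_K, hx'1] at this
    simp at this
    exact hx0 (by simpa [hx', smul_eq_zero, norm_ne_zero_iff.mpr hx0] using this)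
  have hKtop : K = ⊤ := Submodule.orthogonal_eq_bot_iff.mp hKorth
  have hsurj : Function.Surjective u := by
    intro y
    have : y ∈ K := hKtop ▸ Submodule.mem_top
    exact this
  have hu2 : u * star u = 1 := by
    ext y
    obtain ⟨z, hz⟩ := hsurj y
    have : (star u * u) z = z := by rw [hu1]; rfl
    calc (u * star u) y = u ((star u) (u z)) := by rw [← hz]; rfl
      _ = u z := by rw [show (star u) (u z) = (star u * u) z from rfl, hu1]; rfl
      _ = y := hz
  exact ⟨Unitary.mem_iff.mpr ⟨hu1, hu2⟩, hnorm⟩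
end

section
/- Let H be a complex Hilbert space and let J be a conjugate-linear isometric involution on H. For every bounded finite-rank operator T on H, the operators T and JT*J are similar: there exists an invertible bounded linear operator S on H with T = S(JT*J)S⁻¹. -/
set_option synthInstance.maxHeartbeats 1000000
set_option maxHeartbeats 1000000

open Cardinal

/-- A conjugate-linear isometric involution of a complex Hilbert space. -/
def IsConjLinearIsometricInvolution {H : Type*} [NormedAddCommGroup H]
    [InnerProductSpace ℂ H] (J : H → H) : Prop :=
  (∀ x y : H, J (x + y) = J x + J y) ∧
    (∀ (c : ℂ) (x : H), J (c • x) = (starRingEnd ℂ) c • J x) ∧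
    (∀ x : H, ‖J x‖ = ‖x‖) ∧ ∀ x : H, J (J x) = x

section Aux

open Polynomial DirectSum


lemma block_pairing (g : ℂ[X]) (hg : g ≠ 0) :
    ∃ h : (ℂ[X] ⧸ (ℂ[X] ∙ g)) →ₗ[ℂ] (ℂ[X] ⧸ (ℂ[X] ∙ g)) →ₗ[ℂ] ℂ,
      (∀ a, (∀ b, h a b = 0) → a = 0) ∧
      (∀ (p : ℂ[X]) (a b), h (p • a) b = h a (p • b)) := by
  classical
  set m : ℂ[X] := g * C g.leadingCoeff⁻¹ with hm
  have hmono : m.Monic := monic_mul_leadingCoeff_inv hg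
  have hgm : ∀ r : ℂ[X], g ∣ r → m ∣ r := by
    rintro r ⟨c, rfl⟩
    exact ⟨C g.leadingCoeff * c, by
      rw [hm, mul_assoc, ← mul_assoc (C g.leadingCoeff⁻¹), ← C_mul,
        inv_mul_cancel₀ (leadingCoeff_ne_zero.mpr hg), C_1, one_mul]⟩
  set n : ℕ := m.natDegree with hn
  set ν : ℂ[X] →ₗ[ℂ] ℂ :=
    { toFun := fun r => (r %ₘ m).coeff (n - 1)
      map_add' := fun r s => by simp [add_modByMonic]
      map_smul' := fun c r => by simp [smul_modByMonic] } with hν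
  have hν_apply : ∀ r : ℂ[X], ν r = (r %ₘ m).coeff (n - 1) := fun _ => rfl
  have hker : ∀ r ∈ (ℂ[X] ∙ g).restrictScalars ℂ, ν r = 0 := by
    intro r hr
    rw [Submodule.restrictScalars_mem, Submodule.mem_span_singleton] at hr
    obtain ⟨c, rfl⟩ := hr
    have : m ∣ c • g := hgm _ ⟨c, by rw [smul_eq_mul, mul_comm]⟩
    rw [hν_apply, (modByMonic_eq_zero_iff_dvd hmono).2 this, coeff_zero]
  set μ : (ℂ[X] ⧸ (ℂ[X] ∙ g)) →ₗ[ℂ] ℂ :=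
    (Submodule.liftQ ((ℂ[X] ∙ g).restrictScalars ℂ) ν hker).comp
      ((Submodule.Quotient.restrictScalarsEquiv ℂ (ℂ[X] ∙ g)).symm : _ →ₗ[ℂ] _) with hμ
  have hμ_apply : ∀ r : ℂ[X], μ (Submodule.Quotient.mk r) = (r %ₘ m).coeff (n - 1) := by
    intro r
    rw [hμ]
    simp only [LinearMap.comp_apply, LinearEquiv.coe_coe]
    rw [show ((Submodule.Quotient.restrictScalarsEquiv ℂ (ℂ[X] ∙ g)).symm
        (Submodule.Quotient.mk r) : ℂ[X] ⧸ (ℂ[X] ∙ g).restrictScalars ℂ)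
        = Submodule.Quotient.mk r from rfl]
    exact (Submodule.liftQ_apply _ _ _).trans (hν_apply r)
  refine ⟨LinearMap.mk₂ ℂ (fun a b => μ (a * b))
      (fun a a' b => by rw [add_mul, map_add])
      (fun c a b => by rw [smul_mul_assoc, map_smul, smul_eq_mul])
      (fun a b b' => by rw [mul_add, map_add])
      (fun c a b => by rw [mul_smul_comm, map_smul, smul_eq_mul]), ?_, ?_⟩
  · -- nondegeneracy
    intro a ha
    obtain ⟨r, rfl⟩ := Submodule.Quotient.mk_surjective _ a
    by_contra hne
    have hmkr : (Submodule.Quotient.mk (r %ₘ m) : ℂ[X] ⧸ (ℂ[X] ∙ g))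
        = Submodule.Quotient.mk r := by
      rw [Submodule.Quotient.eq, Submodule.mem_span_singleton]
      refine ⟨-(C g.leadingCoeff⁻¹ * (r /ₘ m)), ?_⟩
      have h := modByMonic_add_div r m
      rw [hm] at h
      rw [smul_eq_mul, hm]
      linear_combination -h
    set r' : ℂ[X] := r %ₘ m with hr'
    have hr'0 : r' ≠ 0 := by
      intro h0
      apply hne
      rw [← hmkr, h0, Submodule.Quotient.mk_eq_zero]
      exact Submodule.zero_mem _
    have hdlt : r'.natDegree < n := by
      rw [hn]
      exact natDegree_lt_natDegree hr'0 (degree_modByMonic_lt r hmono)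
    set d : ℕ := r'.natDegree with hd
    set j : ℕ := n - 1 - d with hj
    have hdj : d + j = n - 1 := by omega
    have key := ha (Submodule.Quotient.mk (X ^ j))
    rw [← hmkr, LinearMap.mk₂_apply,
      show (Submodule.Quotient.mk r' : ℂ[X] ⧸ (ℂ[X] ∙ g)) * Submodule.Quotient.mk (X ^ j)
        = Submodule.Quotient.mk (r' * X ^ j) from rfl, hμ_apply] at key
    have hXj : (X : ℂ[X]) ^ j ≠ 0 := pow_ne_zero _ X_ne_zero
    have hnd : (r' * X ^ j).natDegree = n - 1 := by
      rw [natDegree_mul hr'0 hXj, natDegree_X_pow, ← hd, hdj]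
    have hmod : (r' * X ^ j) %ₘ m = r' * X ^ j := by
      rw [modByMonic_eq_self_iff hmono]
      have h1 : (r' * X ^ j).degree = ((n - 1 : ℕ) : WithBot ℕ) := by
        rw [degree_eq_natDegree (mul_ne_zero hr'0 hXj), hnd]
      have h2 : m.degree = (n : WithBot ℕ) := by
        rw [degree_eq_natDegree hmono.ne_zero, hn]
      rw [h1, h2]
      exact_mod_cast Nat.sub_lt (by omega) one_pos
    rw [hmod] at key
    have : (r' * X ^ j).coeff (n - 1) = r'.leadingCoeff := by
      rw [← hdj, coeff_mul_X_pow, hd, leadingCoeff]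
    rw [this] at key
    exact leadingCoeff_ne_zero.mpr hr'0 key
  · -- intertwining
    intro p a b
    obtain ⟨r, rfl⟩ := Submodule.Quotient.mk_surjective _ a
    obtain ⟨s, rfl⟩ := Submodule.Quotient.mk_surjective _ b
    rw [LinearMap.mk₂_apply, LinearMap.mk₂_apply,
      show p • (Submodule.Quotient.mk r : ℂ[X] ⧸ (ℂ[X] ∙ g)) = Submodule.Quotient.mk (p * r)
        from rfl,
      show p • (Submodule.Quotient.mk s : ℂ[X] ⧸ (ℂ[X] ∙ g)) = Submodule.Quotient.mk (p * s)
        from rfl,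
      show (Submodule.Quotient.mk (p * r) : ℂ[X] ⧸ (ℂ[X] ∙ g)) * Submodule.Quotient.mk s
        = Submodule.Quotient.mk (p * r * s) from rfl,
      show (Submodule.Quotient.mk r : ℂ[X] ⧸ (ℂ[X] ∙ g)) * Submodule.Quotient.mk (p * s)
        = Submodule.Quotient.mk (r * (p * s)) from rfl,
      show r * (p * s) = p * r * s by ring]


lemma exists_pairing {V : Type*} [AddCommGroup V] [Module ℂ V] [FiniteDimensional ℂ V]
    (B : V →ₗ[ℂ] V) :
    ∃ ψ : V →ₗ[ℂ] V →ₗ[ℂ] ℂ,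
      (∀ x, (∀ y, ψ x y = 0) → x = 0) ∧ (∀ x y, ψ (B x) y = ψ x (B y)) := by
  classical
  have htors : Module.IsTorsion ℂ[X] (Module.AEval' B) := by
    intro x
    refine ⟨⟨B.charpoly, mem_nonZeroDivisors_of_ne_zero B.charpoly_monic.ne_zero⟩, ?_⟩
    have h1 : (Module.AEval.of ℂ V B).symm (B.charpoly • x)
        = (aeval B B.charpoly) • (Module.AEval.of ℂ V B).symm x := Module.AEval.of_symm_smul _ _ _
    have h2 : (aeval B B.charpoly) = 0 := LinearMap.aeval_self_charpoly B
    apply (Module.AEval.of ℂ V B).symm.injective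
    rw [Submonoid.mk_smul, h1, h2, zero_smul, map_zero]
  obtain ⟨ι, hfin, p, hirr, e, ⟨E⟩⟩ := Module.equiv_directSum_of_isTorsion htors
  haveI := hfin
  set q : ι → ℂ[X] := fun i => p i ^ e i with hq
  have hq0 : ∀ i, q i ≠ 0 := fun i => pow_ne_zero _ (hirr i).ne_zero
  choose h hnd hcomp using fun i => block_pairing (q i) (hq0 i)
  -- the ℂ-linear equivalence V ≃ direct sum
  set Fe : V ≃ₗ[ℂ] (⨁ (i : ι), ℂ[X] ⧸ (ℂ[X] ∙ q i)) :=
    (Module.AEval.of ℂ V B).trans (E.restrictScalars ℂ) with hFe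
  set Ψd : (⨁ (i : ι), ℂ[X] ⧸ (ℂ[X] ∙ q i)) →ₗ[ℂ] (⨁ (i : ι), ℂ[X] ⧸ (ℂ[X] ∙ q i)) →ₗ[ℂ] ℂ :=
    ∑ i : ι, (h i).compl₁₂ (DirectSum.component ℂ ι _ i) (DirectSum.component ℂ ι _ i) with hΨd
  have hΨd_apply : ∀ u v, Ψd u v = ∑ i : ι, h i (u i) (v i) := by
    intro u v
    rw [hΨd]
    simp [LinearMap.sum_apply, LinearMap.compl₁₂_apply]
    rfl
  have hX : ∀ x : V, Fe (B x) = (X : ℂ[X]) • Fe x := by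
    intro x
    rw [hFe]
    simp only [LinearEquiv.trans_apply, LinearEquiv.restrictScalars_apply]
    rw [show (Module.AEval.of ℂ V B) (B x) = (X : ℂ[X]) • (Module.AEval.of ℂ V B) x from
      (Module.AEval.X_smul_of B x).symm, map_smul]
  refine ⟨Ψd.compl₁₂ (Fe : V →ₗ[ℂ] _) (Fe : V →ₗ[ℂ] _), ?_, ?_⟩
  · intro x hx
    have hcomp0 : ∀ i, Fe x i = 0 := by
      intro i
      apply hnd i
      intro b
      have hb := hx (Fe.symm (DirectSum.lof ℂ ι (fun j => ℂ[X] ⧸ (ℂ[X] ∙ q j)) i b))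
      rw [LinearMap.compl₁₂_apply, LinearEquiv.coe_coe, Fe.apply_symm_apply,
        hΨd_apply] at hb
      rw [Finset.sum_eq_single i
        (fun j _ hji => by
          rw [DirectSum.lof_eq_of, DirectSum.of_eq_of_ne _ _ _ hji, map_zero])
        (fun hin => absurd (Finset.mem_univ i) hin)] at hb
      rwa [DirectSum.lof_eq_of, DirectSum.of_eq_same] at hb
    have : Fe x = 0 := DFinsupp.ext fun i => by rw [hcomp0 i]; rfl
    exact (LinearEquiv.map_eq_zero_iff Fe).1 this
  · intro x y
    simp only [LinearMap.compl₁₂_apply, LinearEquiv.coe_coe]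
    rw [hX, hX, hΨd_apply, hΨd_apply]
    refine Finset.sum_congr rfl fun i _ => ?_
    rw [DFinsupp.smul_apply, DFinsupp.smul_apply]
    exact hcomp i X _ _


lemma exists_conj {V : Type*} [AddCommGroup V] [Module ℂ V] [FiniteDimensional ℂ V]
    (B C : V →ₗ[ℂ] V) (φ : V →ₗ[ℂ] V →ₗ[ℂ] ℂ)
    (hφnd : ∀ x, (∀ y, φ x y = 0) → x = 0)
    (hint : ∀ x y, φ (C x) y = φ x (B y)) :
    ∃ S : V ≃ₗ[ℂ] V, ∀ z, S (C (S.symm z)) = B z := by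
  obtain ⟨ψ, hψnd, hψsa⟩ := exists_pairing B
  have hφ0 : ∀ x, φ x = 0 → x = 0 := fun x hx => hφnd x fun y => by rw [hx]; rfl
  have hψ0 : ∀ x, ψ x = 0 → x = 0 := fun x hx => hψnd x fun y => by rw [hx]; rfl
  have hΦinj : Function.Injective φ := LinearMap.ker_eq_bot.1 (LinearMap.ker_eq_bot'.2 hφ0)
  have hΨinj : Function.Injective ψ := LinearMap.ker_eq_bot.1 (LinearMap.ker_eq_bot'.2 hψ0)
  set Φe : V ≃ₗ[ℂ] Module.Dual ℂ V :=
    LinearMap.linearEquivOfInjective φ hΦinj Subspace.dual_finrank_eq.symm with hΦe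
  set Ψe : V ≃ₗ[ℂ] Module.Dual ℂ V :=
    LinearMap.linearEquivOfInjective ψ hΨinj Subspace.dual_finrank_eq.symm with hΨe
  have hΦe_apply : ∀ x, Φe x = φ x := fun x => LinearMap.linearEquivOfInjective_apply _ _ _
  have hΨe_apply : ∀ x, Ψe x = ψ x := fun x => LinearMap.linearEquivOfInjective_apply _ _ _
  set S : V ≃ₗ[ℂ] V := Φe.trans Ψe.symm with hS
  have hSw : ∀ w, ψ (S w) = φ w := by
    intro w
    rw [← hΦe_apply, ← hΨe_apply, hS]
    simp only [LinearEquiv.trans_apply, LinearEquiv.apply_symm_apply]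
  have key : ∀ w, S (C w) = B (S w) := by
    intro w
    apply Ψe.injective
    rw [hΨe_apply, hΨe_apply]
    have h1 : ψ (S (C w)) = φ (C w) := hSw (C w)
    rw [h1]
    ext y
    rw [hint, hψsa, hSw]
  refine ⟨S, fun z => ?_⟩
  rw [key (S.symm z), S.apply_symm_apply]



lemma J_inner {H : Type*} [NormedAddCommGroup H] [InnerProductSpace ℂ H] (J : H → H)
    (hadd : ∀ x y : H, J (x + y) = J x + J y)
    (hsmul : ∀ (c : ℂ) (x : H), J (c • x) = (starRingEnd ℂ) c • J x)
    (hnorm : ∀ x : H, ‖J x‖ = ‖x‖) :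
    ∀ x y : H, (inner ℂ (J x) (J y) : ℂ) = inner ℂ y x := by
  have hneg : ∀ x : H, J (-x) = -J x := by
    intro x
    rw [← neg_one_smul ℂ x, hsmul]
    simp
  have hsub : ∀ x y : H, J (x - y) = J x - J y := by
    intro x y
    rw [sub_eq_add_neg, hadd, hneg, sub_eq_add_neg]
  intro x y
  have hI : (RCLike.I : ℂ) = Complex.I := rfl
  have e1 : ‖J x + J y‖ = ‖y + x‖ := by rw [← hadd, hnorm, add_comm]
  have e2 : ‖J x - J y‖ = ‖y - x‖ := by rw [← hsub, hnorm, norm_sub_rev]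
  have hJI : ∀ z : H, J (Complex.I • z) = -(Complex.I • J z) := by
    intro z
    rw [hsmul, Complex.conj_I, neg_smul]
  have e3 : ‖J x - (RCLike.I : ℂ) • J y‖ = ‖y - (RCLike.I : ℂ) • x‖ := by
    rw [hI]
    have h1 : J x - Complex.I • J y = J (x + Complex.I • y) := by
      rw [hadd, hJI, sub_eq_add_neg]
    have h2 : y - Complex.I • x = (-Complex.I) • (x + Complex.I • y) := by
      rw [smul_add, smul_smul]
      simp [Complex.I_mul_I]
      module
    rw [h1, hnorm, h2, norm_smul]
    simp
  have e4 : ‖J x + (RCLike.I : ℂ) • J y‖ = ‖y + (RCLike.I : ℂ) • x‖ := by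
    rw [hI]
    have h1 : J x + Complex.I • J y = J (x - Complex.I • y) := by
      rw [hsub, hJI, sub_neg_eq_add]
    have h2 : y + Complex.I • x = Complex.I • (x - Complex.I • y) := by
      rw [smul_sub, smul_smul]
      simp [Complex.I_mul_I]
      module
    rw [h1, hnorm, h2, norm_smul]
    simp
  rw [inner_eq_sum_norm_sq_div_four, inner_eq_sum_norm_sq_div_four, e1, e2, e3, e4]


end Aux

set_option maxHeartbeats 4000000 in
set_option synthInstance.maxHeartbeats 1000000 in
theorem stmt19 {H : Type*} [NormedAddCommGroup H] [InnerProductSpace ℂ H]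
    [CompleteSpace H]
    (J : H → H) (hJ : IsConjLinearIsometricInvolution J)
    (T : H →L[ℂ] H)
    -- `T` has finite rank
    (hT : LinearMap.rank (T : H →ₗ[ℂ] H) < ℵ₀) :
    -- `T` and `J T* J` are similar: `T = S (J T* J) S⁻¹`
    ∃ S : H ≃L[ℂ] H, ∀ x : H,
      T x = S (J (ContinuousLinearMap.adjoint T (J (S.symm x)))) := by
  classical
  obtain ⟨hadd, hsmul, hnorm, hinv⟩ := hJ
  have hJ0 : J 0 = 0 := by
    have h : J 0 + J 0 = J 0 + 0 := by
      rw [add_zero, ← hadd, add_zero]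
    exact add_left_cancel h
  have hJinner := J_inner J hadd hsmul hnorm
  set T' : H →L[ℂ] H := ContinuousLinearMap.adjoint T with hT'def
  set A : H →ₗ[ℂ] H :=
    { toFun := fun x => J (T' (J x))
      map_add' := fun x y => by simp only [hadd, map_add]
      map_smul' := fun c x => by
        simp only [hsmul, map_smul, RingHom.id_apply, Complex.conj_conj, RingHomCompTriple.comp_apply] } with hAdef
  have hA_apply : ∀ x, A x = J (T' (J x)) := fun _ => rfl
  -- submodules
  set W1 : Submodule ℂ H := LinearMap.range (T : H →ₗ[ℂ] H) with hW1
  set W2 : Submodule ℂ H := LinearMap.range (T' : H →ₗ[ℂ] H) with hW2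
  set Kt : Submodule ℂ H := LinearMap.ker (T : H →ₗ[ℂ] H) with hKt
  have hKt_mem : ∀ x, x ∈ Kt ↔ T x = 0 := fun x => Iff.rfl
  haveI hW1fd : FiniteDimensional ℂ W1 := by
    rw [hW1]
    exact Module.rank_lt_aleph0_iff.mp hT
  -- `Ktᗮ` is finite dimensional : `T` restricted to it is injective into `W1`
  haveI hKtofd : FiniteDimensional ℂ (Ktᗮ : Submodule ℂ H) := by
    have hinj : Function.Injective
        ((T : H →ₗ[ℂ] H).domRestrict Ktᗮ) := by
      intro x y hxy
      have hxmy : (T : H →ₗ[ℂ] H) ((x : H) - y) = 0 := by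
        rw [map_sub, sub_eq_zero]
        exact hxy
      have hmem : ((x : H) - y) ∈ Kt := hxmy
      have hmem2 : ((x : H) - y) ∈ Ktᗮ := Submodule.sub_mem _ x.2 y.2
      have : ((x : H) - y) = 0 := by
        have h0 := (Submodule.mem_orthogonal Kt _).mp hmem2 _ hmem
        rwa [inner_self_eq_zero] at h0
      exact Subtype.ext (sub_eq_zero.mp this)
    exact FiniteDimensional.of_injective
      (((T : H →ₗ[ℂ] H).domRestrict Ktᗮ).codRestrict W1
        (fun x => LinearMap.mem_range_self _ _))
      (fun x y hxy => hinj (congrArg Subtype.val hxy))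
  have hW2le : W2 ≤ Ktᗮ := by
    rintro _ ⟨u, rfl⟩
    rw [Submodule.mem_orthogonal]
    intro k hk
    have hTk : T k = 0 := hk
    have : (inner ℂ (T' u) k : ℂ) = inner ℂ u (T k) := ContinuousLinearMap.adjoint_inner_left T k u
    rw [hTk, inner_zero_right] at this
    calc (inner ℂ k (T' u) : ℂ) = (starRingEnd ℂ) (inner ℂ (T' u) k) := (inner_conj_symm _ _).symm
    _ = 0 := by rw [this, map_zero]
  haveI hW2fd : FiniteDimensional ℂ W2 := Submodule.finiteDimensional_of_le hW2le
  set W : Submodule ℂ H := W1 ⊔ W2 ⊔ Ktᗮ with hW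
  haveI hWfd : FiniteDimensional ℂ W := by rw [hW]; infer_instance
  -- a finite spanning set of `W`
  obtain ⟨s, hsfin, hsspan⟩ := Submodule.fg_def.mp ((Submodule.fg_top W).mp (Module.Finite.fg_top (R := ℂ) (M := W)))
  -- the `J`-stable finite-dimensional subspace
  set V : Submodule ℂ H := W ⊔ Submodule.span ℂ (J '' s) with hV
  haveI hVfd : FiniteDimensional ℂ V := by
    haveI : FiniteDimensional ℂ (Submodule.span ℂ (J '' s)) :=
      FiniteDimensional.span_of_finite ℂ (hsfin.image J)
    rw [hV]; infer_instance
  -- J maps spans into spans of images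
  have hJspan : ∀ (u : Set H) (x : H), x ∈ Submodule.span ℂ u →
      J x ∈ Submodule.span ℂ (J '' u) := by
    intro u x hx
    induction hx using Submodule.span_induction with
    | mem z hz => exact Submodule.subset_span ⟨z, hz, rfl⟩
    | zero => rw [hJ0]; exact Submodule.zero_mem _
    | add a b _ _ ha hb => rw [hadd]; exact Submodule.add_mem _ ha hb
    | smul c a _ ha => rw [hsmul]; exact Submodule.smul_mem _ _ ha
  have hJV : ∀ x ∈ V, J x ∈ V := by
    intro x hx
    rw [hV, Submodule.mem_sup] at hx
    obtain ⟨w, hw, z, hz, rfl⟩ := hx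
    rw [hadd]
    apply Submodule.add_mem
    · -- J w ∈ span (J '' s) ≤ V
      have hw' : w ∈ Submodule.span ℂ s := by rw [hsspan]; exact hw
      exact Submodule.mem_sup_right (hJspan s w hw')
    · -- J z ∈ W ≤ V
      have hz' : J z ∈ Submodule.span ℂ (J '' (J '' s)) := hJspan _ z hz
      have himg : J '' (J '' s) = s := by
        rw [Set.image_image]
        simp only [hinv, Set.image_id']
      rw [himg, hsspan] at hz'
      exact Submodule.mem_sup_left hz'
  have hWV : W ≤ V := le_sup_left
  have hW1W : W1 ≤ W := le_trans le_sup_left le_sup_left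
  have hW2W : W2 ≤ W := le_trans le_sup_right le_sup_left
  have hKtoW : Ktᗮ ≤ W := le_sup_right
  have hW1V : W1 ≤ V := le_trans hW1W hWV
  have hW2V : W2 ≤ V := le_trans hW2W hWV
  have hKtoV : Ktᗮ ≤ V := le_trans hKtoW hWV
  have hTV : ∀ x ∈ V, T x ∈ V := fun x _ => hW1V ⟨x, rfl⟩
  have hAV : ∀ x ∈ V, A x ∈ V := by
    intro x hx
    rw [hA_apply]
    exact hJV _ (hW2V ⟨J x, rfl⟩)
  -- orthogonal complement facts
  have hKtclosed : IsClosed (Kt : Set H) := by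
    rw [hKt]
    exact ContinuousLinearMap.isClosed_ker T
  haveI : CompleteSpace Kt := hKtclosed.completeSpace_coe
  have hVperpT : ∀ x ∈ Vᗮ, T x = 0 := by
    intro x hx
    have h1 : Vᗮ ≤ Ktᗮᗮ := Submodule.orthogonal_le hKtoV
    have h2 : Ktᗮᗮ = Kt := Submodule.orthogonal_orthogonal Kt
    exact (h2 ▸ h1) hx
  have hVperpT' : ∀ x ∈ Vᗮ, T' x = 0 := by
    intro x hx
    have hxW1 : ∀ u ∈ W1, (inner ℂ u x : ℂ) = 0 :=
      fun u hu => (Submodule.mem_orthogonal V x).mp hx u (hW1V hu)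
    have h0 : (inner ℂ (T' x) (T' x) : ℂ) = 0 := by
      rw [ContinuousLinearMap.adjoint_inner_left T (T' x) x]
      have hmem : T (T' x) ∈ W1 := ⟨T' x, rfl⟩
      calc (inner ℂ x (T (T' x)) : ℂ)
          = (starRingEnd ℂ) (inner ℂ (T (T' x)) x) := (inner_conj_symm _ _).symm
        _ = 0 := by rw [hxW1 _ hmem, map_zero]
    rwa [inner_self_eq_zero] at h0
  have hJperp : ∀ x ∈ Vᗮ, J x ∈ Vᗮ := by
    intro x hx
    rw [Submodule.mem_orthogonal]
    intro v hv
    have hJv : J v ∈ V := hJV v hv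
    have h1 : (inner ℂ (J (J v)) (J x) : ℂ) = inner ℂ x (J v) := hJinner (J v) x
    rw [hinv] at h1
    rw [h1]
    calc (inner ℂ x (J v) : ℂ)
        = (starRingEnd ℂ) (inner ℂ (J v) x) := (inner_conj_symm _ _).symm
      _ = 0 := by rw [(Submodule.mem_orthogonal V x).mp hx _ hJv, map_zero]
  have hVperpA : ∀ x ∈ Vᗮ, A x = 0 := by
    intro x hx
    rw [hA_apply, hVperpT' _ (hJperp x hx), hJ0]
  -- restricted maps on V
  set B : V →ₗ[ℂ] V := (T : H →ₗ[ℂ] H).restrict hTV with hB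
  set C : V →ₗ[ℂ] V := A.restrict hAV with hC
  have hBval : ∀ x : V, ((B x : H)) = T x := fun x => rfl
  have hCval : ∀ x : V, ((C x : H)) = A x := fun x => rfl
  -- the sesquilinear-turned-bilinear pairing
  set φ : V →ₗ[ℂ] V →ₗ[ℂ] ℂ := LinearMap.mk₂ ℂ (fun x y => (inner ℂ (J (x : H)) (y : H) : ℂ))
    (fun x x' y => by
      rw [Submodule.coe_add, hadd, inner_add_left])
    (fun c x y => by
      rw [Submodule.coe_smul, hsmul, inner_smul_left, Complex.conj_conj, smul_eq_mul])
    (fun x y y' => by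
      rw [Submodule.coe_add, inner_add_right])
    (fun c x y => by
      rw [Submodule.coe_smul, inner_smul_right, smul_eq_mul]) with hφ
  have hφ_apply : ∀ x y : V, φ x y = (inner ℂ (J (x : H)) (y : H) : ℂ) := fun _ _ => rfl
  have hφnd : ∀ x : V, (∀ y : V, φ x y = 0) → x = 0 := by
    intro x hx
    have hJx : J (x : H) ∈ V := hJV _ x.2
    have h0 := hx ⟨J (x : H), hJx⟩
    rw [hφ_apply] at h0
    have : J (x : H) = 0 := by rwa [inner_self_eq_zero] at h0
    have hx0 : (x : H) = 0 := by
      rw [← hinv (x : H), this, hJ0]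
    exact Subtype.ext hx0
  have hint : ∀ x y : V, φ (C x) y = φ x (B y) := by
    intro x y
    rw [hφ_apply, hφ_apply, hCval, hBval, hA_apply, hinv]
    exact ContinuousLinearMap.adjoint_inner_left T (y : H) (J (x : H))
  obtain ⟨S₁, hS₁⟩ := exists_conj B C φ hφnd hint
  -- assemble the continuous equivalence
  haveI : CompleteSpace V := FiniteDimensional.complete ℂ V
  set P : H →L[ℂ] V := V.orthogonalProjectionOnto with hP
  set S₁L : V ≃L[ℂ] V := S₁.toContinuousLinearEquiv with hS₁L
  have hS₁L_apply : ∀ v : V, S₁L v = S₁ v := fun _ => rfl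
  have hS₁Lsymm_apply : ∀ v : V, S₁L.symm v = S₁.symm v := fun _ => rfl
  set f : H →L[ℂ] H := V.subtypeL.comp ((S₁L : V →L[ℂ] V).comp P) +
    (ContinuousLinearMap.id ℂ H - V.subtypeL.comp P) with hf
  set g : H →L[ℂ] H := V.subtypeL.comp ((S₁L.symm : V →L[ℂ] V).comp P) +
    (ContinuousLinearMap.id ℂ H - V.subtypeL.comp P) with hg
  have hf_apply : ∀ x, f x = ((S₁ (P x) : H)) + (x - ((P x : H))) := fun x => rfl
  have hg_apply : ∀ x, g x = ((S₁.symm (P x) : H)) + (x - ((P x : H))) := fun x => rfl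
  have hPmem : ∀ v : V, P ((v : H)) = v := fun v => Submodule.orthogonalProjectionOnto_mem_subspace_eq_self v
  have hfg : ∀ x, g (f x) = x := by
    intro x
    rw [hf_apply, hg_apply]
    have h1 : P ((S₁ (P x) : H) + (x - ((P x : H)))) = S₁ (P x) := by
      rw [map_add, map_sub, hPmem, hPmem]
      simp
    rw [h1, LinearEquiv.symm_apply_apply]
    abel
  have hgf : ∀ x, f (g x) = x := by
    intro x
    rw [hg_apply, hf_apply]
    have h1 : P ((S₁.symm (P x) : H) + (x - ((P x : H)))) = S₁.symm (P x) := by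
      rw [map_add, map_sub, hPmem, hPmem]
      simp
    rw [h1, LinearEquiv.apply_symm_apply]
    abel
  refine ⟨ContinuousLinearEquiv.equivOfInverse f g hfg hgf, fun x => ?_⟩
  rw [ContinuousLinearEquiv.symm_equivOfInverse, ContinuousLinearEquiv.equivOfInverse_apply,
    ContinuousLinearEquiv.equivOfInverse_apply]
  -- now a pure computation
  set v : V := P x with hv
  have hxperp : x - (v : H) ∈ Vᗮ := Submodule.sub_starProjection_mem_orthogonal (K := V) x
  have hgx : g x = ((S₁.symm v : H)) + (x - (v : H)) := hg_apply x
  have hTJ' : T' (J (g x)) = T' (J ((S₁.symm v : H))) := by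
    rw [hgx, hadd, map_add, hVperpT' _ (hJperp _ hxperp), add_zero]
  have hstep : J (T' (J (g x))) = ((C (S₁.symm v) : H)) := by
    rw [hTJ', ← hA_apply, ← hCval]
  rw [hstep]
  -- f of an element of V
  have hfV : ∀ z : V, f ((z : H)) = ((S₁ z : H)) := by
    intro z
    rw [hf_apply, hPmem]
    abel
  rw [hfV, hS₁]
  -- left hand side
  have hx_split : T x = T ((v : H)) := by
    have h1 : T x = T ((v : H)) + T (x - (v : H)) := by
      rw [← map_add]
      congr 1
      abel
    rw [h1, hVperpT _ hxperp, add_zero]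
  rw [hBval, hx_split]
end
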